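/- Let K ⊆ ℝ^d be a convex set of diameter at most D with D ≥ 1/√2, T ≥ 1, and let ℓ₁, …, ℓ_T : ℝ^d → ℝ be differentiable convex functions on K. Set ε := 2/D² and η := D/√2. Let μ̂₁, …, μ̂_{T+1} ∈ K and ν₁, …, ν_{T+1} ∈ K; write ∇_t := ∇ℓ_t(μ̂_t), G₀ := ε·I_d, G_t := G_{t−1} + ∇_t∇_tᵀ, H_t := G_t^{1/2} (the unique positive semidefinite square root), and μ̂_{temp,t+1} := μ̂_t − η·H_t⁻¹∇_t. Assume for every 1 ≤ t ≤ T the ADJUST contraction (μ̂_{t+1} − ν_{t+1})ᵀ H_t (μ̂_{t+1} − ν_{t+1}) ≤ (μ̂_{temp,t+1} − ν_t)ᵀ H_t (μ̂_{temp,t+1} − ν_t). Then Σ_{t=1}^{T} (ℓ_t(μ̂_t) − ℓ_t(ν_t)) ≤ √2·D·(1 + Tr(H_T)). -/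

import Mathlib

open Matrix RealInnerProductSpace Finset

namespace DAdagradAux

variable {n : ℕ}

lemma symm_dot (M : Matrix (Fin n) (Fin n) ℝ) (hM : M.IsHermitian)
    (a b : Fin n → ℝ) : a ⬝ᵥ M *ᵥ b = (M *ᵥ a) ⬝ᵥ b := by
  rw [Matrix.dotProduct_mulVec]
  congr 1
  rw [← Matrix.vecMul_transpose]
  congr 1
  rw [← Matrix.conjTranspose_eq_transpose_of_trivial, hM.eq]

lemma psd_vecMulVec (a : Fin n → ℝ) : (Matrix.vecMulVec a a).PosSemidef := by
  refine Matrix.PosSemidef.of_dotProduct_mulVec_nonneg ?_ ?_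
  · ext i j
    simp [Matrix.vecMulVec_apply, Matrix.conjTranspose_apply, mul_comm]
  · intro x
    have h : star x ⬝ᵥ (Matrix.vecMulVec a a) *ᵥ x = (a ⬝ᵥ x) * (a ⬝ᵥ x) := by
      simp only [star_trivial, dotProduct, Matrix.mulVec, Matrix.vecMulVec_apply,
        Finset.sum_mul_sum]
      rw [Finset.sum_congr rfl]
      intro i _
      rw [Finset.mul_sum, Finset.sum_congr rfl]
      intro j _
      ring
    rw [h]
    exact mul_self_nonneg _

lemma trace_nonneg' {M : Matrix (Fin n) (Fin n) ℝ} (hM : M.PosSemidef) :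
    0 ≤ M.trace := by
  obtain ⟨B, rfl⟩ : ∃ B : Matrix (Fin n) (Fin n) ℝ, M = Bᴴ * B := by
    open scoped MatrixOrder in
    exact ⟨CFC.sqrt M, by rw [(CFC.sqrt_nonneg M).posSemidef.1.eq, CFC.sqrt_mul_sqrt_self M hM.nonneg]⟩
  rw [Matrix.trace]
  refine Finset.sum_nonneg fun i _ => ?_
  simp only [Matrix.diag_apply, Matrix.mul_apply, Matrix.conjTranspose_apply, star_trivial]
  exact Finset.sum_nonneg fun j _ => mul_self_nonneg _

lemma quad_le_trace {M : Matrix (Fin n) (Fin n) ℝ} (hM : M.PosSemidef)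
    (x : Fin n → ℝ) : x ⬝ᵥ M *ᵥ x ≤ (x ⬝ᵥ x) * M.trace := by
  obtain ⟨B, rfl⟩ : ∃ B : Matrix (Fin n) (Fin n) ℝ, M = Bᴴ * B := by
    open scoped MatrixOrder in
    exact ⟨CFC.sqrt M, by rw [(CFC.sqrt_nonneg M).posSemidef.1.eq, CFC.sqrt_mul_sqrt_self M hM.nonneg]⟩
  have h1 : x ⬝ᵥ (Bᴴ * B) *ᵥ x = ∑ k, ((B *ᵥ x) k)^2 := by
    rw [← Matrix.mulVec_mulVec, Matrix.dotProduct_mulVec,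
      Matrix.conjTranspose_eq_transpose_of_trivial, Matrix.vecMul_transpose]
    simp [dotProduct, pow_two]
  have h2 : (Bᴴ * B).trace = ∑ k, ∑ i, (B k i)^2 := by
    rw [Matrix.trace]
    simp only [Matrix.diag_apply, Matrix.mul_apply, Matrix.conjTranspose_apply, star_trivial,
      ← pow_two]
    exact Finset.sum_comm
  rw [h1, h2, Finset.mul_sum]
  refine Finset.sum_le_sum fun k _ => ?_
  have := Finset.sum_mul_sq_le_sq_mul_sq Finset.univ (fun i => B k i) x
  calc ((B *ᵥ x) k)^2 = (∑ i, B k i * x i)^2 := by simp [Matrix.mulVec, dotProduct]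
    _ ≤ (∑ i, (B k i)^2) * ∑ i, (x i)^2 := this
    _ = (x ⬝ᵥ x) * ∑ i, (B k i)^2 := by
        rw [mul_comm]; congr 1; simp [dotProduct, pow_two]

lemma sub_posSemidef {X Y : Matrix (Fin n) (Fin n) ℝ} (hX : X.PosDef) (hY : Y.PosSemidef)
    (hsq : (X * X - Y * Y).PosSemidef) : (X - Y).PosSemidef := by
  have hM : (X - Y).IsHermitian := hX.isHermitian.sub hY.isHermitian
  refine hM.posSemidef_iff_eigenvalues_nonneg.mpr (Pi.le_def.mpr fun i => ?_)
  have hv := hM.mulVec_eigenvectorBasis i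
  set lam := hM.eigenvalues i with hlam
  set v : Fin n → ℝ := ⇑(hM.eigenvectorBasis i) with hvdef
  have hv0 : v ≠ 0 := by
    have h := hM.eigenvectorBasis.orthonormal.ne_zero i
    intro hc
    exact h (by ext j; exact congrFun hc j)
  have key : v ⬝ᵥ ((X * X - Y * Y) *ᵥ v) = lam * (v ⬝ᵥ X *ᵥ v + v ⬝ᵥ Y *ᵥ v) := by
    have e1 : X * X - Y * Y = X * (X - Y) + (X - Y) * Y := by noncomm_ring
    rw [e1, Matrix.add_mulVec, ← Matrix.mulVec_mulVec, ← Matrix.mulVec_mulVec, hv,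
      dotProduct_add, Matrix.mulVec_smul, dotProduct_smul,
      symm_dot _ hM, hv, smul_dotProduct]
    simp only [smul_eq_mul]
    rw [symm_dot _ hY.isHermitian]
    ring
  have hpos : 0 < v ⬝ᵥ X *ᵥ v + v ⬝ᵥ Y *ᵥ v := by
    have h1 : 0 < v ⬝ᵥ X *ᵥ v := by simpa using hX.dotProduct_mulVec_pos hv0
    have h2 : 0 ≤ v ⬝ᵥ Y *ᵥ v := by simpa using hY.dotProduct_mulVec_nonneg v
    linarith
  have hnn : 0 ≤ v ⬝ᵥ ((X * X - Y * Y) *ᵥ v) := by simpa using hsq.dotProduct_mulVec_nonneg v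
  rw [key] at hnn
  exact (mul_nonneg_iff_of_pos_right hpos).mp hnn

lemma trace_aux {X Y : Matrix (Fin n) (Fin n) ℝ} (hX : X.PosDef) (hY : Y.IsHermitian) :
    2 * Y.trace - X.trace ≤ (X⁻¹ * (Y * Y)).trace := by
  have hdet : IsUnit X.det := hX.det_pos.ne'.isUnit
  have h0 : (0:ℝ) ≤ ((Y - X)ᴴ * X⁻¹ * (Y - X)).trace :=
    trace_nonneg' (hX.inv.posSemidef.conjTranspose_mul_mul_same _)
  have hherm : (Y - X)ᴴ = Y - X := (hY.sub hX.isHermitian).eq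
  have hXiX : X⁻¹ * X = 1 := Matrix.nonsing_inv_mul _ hdet
  have hXXi : X * X⁻¹ = 1 := Matrix.mul_nonsing_inv _ hdet
  have hexp : (Y - X)ᴴ * X⁻¹ * (Y - X) =
      Y * X⁻¹ * Y - Y * (X⁻¹ * X) - X * X⁻¹ * Y + X * (X⁻¹ * X) := by
    rw [hherm]; noncomm_ring
  rw [hXiX, hXXi] at hexp
  simp only [Matrix.mul_one, Matrix.one_mul] at hexp
  rw [hexp] at h0
  have htr : (Y * X⁻¹ * Y).trace = (X⁻¹ * (Y * Y)).trace := by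
    rw [Matrix.trace_mul_cycle, ← Matrix.mul_assoc, Matrix.trace_mul_comm, Matrix.mul_assoc]
  simp only [Matrix.trace_add, Matrix.trace_sub] at h0
  rw [htr] at h0
  linarith

lemma dot_eq_trace (M : Matrix (Fin n) (Fin n) ℝ) (a : Fin n → ℝ) :
    a ⬝ᵥ (M *ᵥ a) = (M * Matrix.vecMulVec a a).trace := by
  rw [Matrix.trace]
  simp only [Matrix.diag_apply, Matrix.mul_apply, Matrix.vecMulVec_apply, dotProduct,
    Matrix.mulVec, Finset.mul_sum]
  refine Finset.sum_congr rfl fun i _ => Finset.sum_congr rfl fun j _ => by ring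

end DAdagradAux


/-- Proposition `dynamic_adagrad` (regret of Dynamic AdaGrad against the advice sequence):
with `ε = 2/D²`, `G₀ = εI`, `G_t = G_{t−1} + ∇_t∇_tᵀ`, `H_t` the unique positive semidefinite
square root of `G_t`, and predictors satisfying the ADJUST contraction in the `H_t`-norm
against the candidates `μ̂_t − ηH_t⁻¹∇_t` with `η = D/√2` and `D ≥ 1/√2`, the regret against
the advice `ν` is at most `√2·D·(1 + Tr(H_T))` (Proposition `dynamic_adagrad`). -/
theorem dadagrad_regret_vs_advice {d : ℕ}
    (K : Set (EuclideanSpace ℝ (Fin d))) (hK : Convex ℝ K)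
    (D : ℝ) (hD : 1 / Real.sqrt 2 ≤ D) (hdiam : ∀ x ∈ K, ∀ y ∈ K, ‖x - y‖ ≤ D)
    (T : ℕ) (hT : 1 ≤ T) (η : ℝ) (hη : η = D / Real.sqrt 2)
    (ℓ : ℕ → EuclideanSpace ℝ (Fin d) → ℝ)
    (g : ℕ → EuclideanSpace ℝ (Fin d) → EuclideanSpace ℝ (Fin d))
    (hdiff : ∀ t, ∀ x, HasGradientAt (ℓ t) (g t x) x)
    (hconv : ∀ t ∈ Icc 1 T, ∀ x ∈ K, ∀ y ∈ K, ℓ t x + ⟪g t x, y - x⟫ ≤ ℓ t y)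
    (ε : ℝ) (hε : ε = 2 / D ^ 2)
    (p ν : ℕ → EuclideanSpace ℝ (Fin d))
    (hpK : ∀ t ∈ Icc 1 (T + 1), p t ∈ K) (hνK : ∀ t ∈ Icc 1 (T + 1), ν t ∈ K)
    (Gm H : ℕ → Matrix (Fin d) (Fin d) ℝ)
    (hG0 : Gm 0 = ε • 1)
    (hGrec : ∀ t ∈ Icc 1 T,
      Gm t = Gm (t - 1) + Matrix.vecMulVec (g t (p t) : Fin d → ℝ) (g t (p t) : Fin d → ℝ))
    (hH : ∀ t ≤ T, (H t).PosSemidef ∧ H t * H t = Gm t)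
    (hadj : ∀ t ∈ Icc 1 T,
      (p (t + 1) - ν (t + 1)) ⬝ᵥ (H t).mulVec (p (t + 1) - ν (t + 1)) ≤
      ((p t - η • (EuclideanSpace.equiv (Fin d) ℝ).symm ((H t)⁻¹.mulVec (g t (p t)))) - ν t)
        ⬝ᵥ (H t).mulVec
          ((p t - η • (EuclideanSpace.equiv (Fin d) ℝ).symm ((H t)⁻¹.mulVec (g t (p t))))
            - ν t)) :
    ∑ t ∈ Icc 1 T, (ℓ t (p t) - ℓ t (ν t)) ≤
      Real.sqrt 2 * D * (1 + (H T).trace) := by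
  classical
  have hs2 : (0:ℝ) < Real.sqrt 2 := by positivity
  have hss : Real.sqrt 2 * Real.sqrt 2 = 2 := Real.mul_self_sqrt (by norm_num)
  have hDpos : 0 < D := lt_of_lt_of_le (by positivity) hD
  have hηpos : 0 < η := by rw [hη]; positivity
  have hsd : Real.sqrt 2 * η = D := by rw [hη]; field_simp
  have hεpos : 0 < ε := by rw [hε]; positivity
  set pp : ℕ → Fin d → ℝ := fun t i => p t i with hpp
  set nn : ℕ → Fin d → ℝ := fun t i => ν t i with hnn
  set gg : ℕ → Fin d → ℝ := fun t i => g t (p t) i with hgg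
  have hggt : ∀ t, (g t (p t) : Fin d → ℝ) = gg t := fun t => by rw [hgg]
  -- positive definiteness of Gm
  have hGpd : ∀ t, t ≤ T → (Gm t).PosDef := by
    intro t
    induction t with
    | zero =>
      intro _
      rw [hG0, Matrix.smul_one_eq_diagonal]
      exact Matrix.posDef_diagonal_iff.mpr fun i => hεpos
    | succ k ih =>
      intro hk
      have hmem : k + 1 ∈ Icc 1 T := by simp only [Finset.mem_Icc]; omega
      have hrec := hGrec (k+1) hmem
      simp only [Nat.add_sub_cancel] at hrec
      rw [hrec]
      exact (ih (by omega)).add_posSemidef (DAdagradAux.psd_vecMulVec _)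
  have hHpsd : ∀ t, t ≤ T → (H t).PosSemidef := fun t ht => (hH t ht).1
  have hHpd : ∀ t, t ≤ T → (H t).PosDef := by
    intro t ht
    have hpsd := hHpsd t ht
    refine Matrix.PosDef.of_dotProduct_mulVec_pos hpsd.1 fun x hx => ?_
    have hGx : 0 < x ⬝ᵥ (Gm t) *ᵥ x := by simpa using (hGpd t ht).dotProduct_mulVec_pos hx
    rcases lt_or_eq_of_le (hpsd.dotProduct_mulVec_nonneg x) with h | h
    · simpa using h
    · exfalso
      have h2 : (H t) *ᵥ x = 0 := (hpsd.dotProduct_mulVec_zero_iff x).mp h.symm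
      have h3 : (Gm t) *ᵥ x = 0 := by
        rw [← (hH t ht).2, ← Matrix.mulVec_mulVec, h2, Matrix.mulVec_zero]
      rw [h3] at hGx
      simp at hGx
  have hHdet : ∀ t, t ≤ T → IsUnit (H t).det := fun t ht => (hHpd t ht).det_pos.ne'.isUnit
  -- squared-diameter bound
  have hnormD : ∀ t ∈ Icc 1 (T+1), (pp t - nn t) ⬝ᵥ (pp t - nn t) ≤ D^2 := by
    intro t ht
    have hn := hdiam _ (hpK t ht) _ (hνK t ht)
    have hvv : (pp t - nn t) ⬝ᵥ (pp t - nn t) = ‖p t - ν t‖^2 := by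
      rw [← real_inner_self_eq_norm_sq]
      simp only [PiLp.inner_apply, RCLike.inner_apply, conj_trivial, dotProduct,
        hpp, hnn, Pi.sub_apply, PiLp.sub_apply]
    rw [hvv]
    have := norm_nonneg (p t - ν t)
    nlinarith
  -- convexity step
  have hconvstep : ∀ t ∈ Icc 1 T, ℓ t (p t) - ℓ t (ν t) ≤ gg t ⬝ᵥ (pp t - nn t) := by
    intro t ht
    obtain ⟨h1, h2⟩ := Finset.mem_Icc.mp ht
    have hp := hpK t (Finset.mem_Icc.mpr ⟨h1, h2.trans (Nat.le_succ T)⟩)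
    have hν := hνK t (Finset.mem_Icc.mpr ⟨h1, h2.trans (Nat.le_succ T)⟩)
    have hc := hconv t ht (p t) hp (ν t) hν
    have hinner : ⟪g t (p t), ν t - p t⟫ = -(gg t ⬝ᵥ (pp t - nn t)) := by
      simp only [PiLp.inner_apply, RCLike.inner_apply, conj_trivial, dotProduct,
        hpp, hnn, hgg, Pi.sub_apply, PiLp.sub_apply]
      rw [← Finset.sum_neg_distrib]
      exact Finset.sum_congr rfl fun i _ => by ring
    rw [hinner] at hc
    linarith
  -- the per-round inequality
  have hstep : ∀ t ∈ Icc 1 T,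
      2*η*(gg t ⬝ᵥ (pp t - nn t)) ≤
        ((pp t - nn t) ⬝ᵥ (H t) *ᵥ (pp t - nn t)
          - (pp (t+1) - nn (t+1)) ⬝ᵥ (H t) *ᵥ (pp (t+1) - nn (t+1)))
        + η^2 * (gg t ⬝ᵥ (H t)⁻¹ *ᵥ gg t) := by
    intro t ht
    have htT : t ≤ T := (Finset.mem_Icc.mp ht).2
    have hsym : (H t).IsHermitian := (hHpsd t htT).1
    have hHq : (H t) *ᵥ ((H t)⁻¹ *ᵥ gg t) = gg t := by
      rw [Matrix.mulVec_mulVec, Matrix.mul_nonsing_inv _ (hHdet t htT), Matrix.one_mulVec]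
    have hA2 : (pp (t+1) - nn (t+1)) ⬝ᵥ (H t) *ᵥ (pp (t+1) - nn (t+1)) ≤
        (pp t - η • ((H t)⁻¹ *ᵥ gg t) - nn t) ⬝ᵥ
          (H t) *ᵥ (pp t - η • ((H t)⁻¹ *ᵥ gg t) - nn t) := hadj t ht
    have hrw : pp t - η • ((H t)⁻¹ *ᵥ gg t) - nn t
        = (pp t - nn t) - η • ((H t)⁻¹ *ᵥ gg t) := by
      funext i
      simp only [Pi.sub_apply, Pi.smul_apply, smul_eq_mul]
      ring
    rw [hrw] at hA2
    have hqHv : ((H t)⁻¹ *ᵥ gg t) ⬝ᵥ (H t) *ᵥ (pp t - nn t) = gg t ⬝ᵥ (pp t - nn t) := by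
      rw [DAdagradAux.symm_dot _ hsym, hHq]
    have hvHq : (pp t - nn t) ⬝ᵥ (H t) *ᵥ ((H t)⁻¹ *ᵥ gg t) = gg t ⬝ᵥ (pp t - nn t) := by
      rw [hHq, dotProduct_comm]
    have hqHq : ((H t)⁻¹ *ᵥ gg t) ⬝ᵥ (H t) *ᵥ ((H t)⁻¹ *ᵥ gg t)
        = gg t ⬝ᵥ (H t)⁻¹ *ᵥ gg t := by
      rw [DAdagradAux.symm_dot _ hsym, hHq]
    have hexp : ((pp t - nn t) - η • ((H t)⁻¹ *ᵥ gg t)) ⬝ᵥ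
          (H t) *ᵥ ((pp t - nn t) - η • ((H t)⁻¹ *ᵥ gg t))
        = (pp t - nn t) ⬝ᵥ (H t) *ᵥ (pp t - nn t)
          - 2*η*(gg t ⬝ᵥ (pp t - nn t))
          + η^2 * (gg t ⬝ᵥ (H t)⁻¹ *ᵥ gg t) := by
      rw [Matrix.mulVec_sub, Matrix.mulVec_smul, sub_dotProduct,
        dotProduct_sub, dotProduct_sub, smul_dotProduct,
        smul_dotProduct, dotProduct_smul, dotProduct_smul,
        hqHv, hvHq, hqHq]
      simp only [smul_eq_mul]
      ring
    rw [hexp] at hA2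
    linarith
  -- telescoping of the potential terms
  have hF : ∀ n : ℕ, n ≤ T →
      (∑ t ∈ Icc 1 n, ((pp t - nn t) ⬝ᵥ (H t) *ᵥ (pp t - nn t)
          - (pp (t+1) - nn (t+1)) ⬝ᵥ (H t) *ᵥ (pp (t+1) - nn (t+1))))
        + (pp (n+1) - nn (n+1)) ⬝ᵥ (H n) *ᵥ (pp (n+1) - nn (n+1))
        ≤ D^2 * (H n).trace := by
    intro n
    induction n with
    | zero =>
      intro _
      rw [show Icc 1 0 = (∅ : Finset ℕ) by rfl, Finset.sum_empty, zero_add]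
      calc (pp 1 - nn 1) ⬝ᵥ (H 0) *ᵥ (pp 1 - nn 1)
          ≤ ((pp 1 - nn 1) ⬝ᵥ (pp 1 - nn 1)) * (H 0).trace :=
            DAdagradAux.quad_le_trace (hHpsd 0 (Nat.zero_le T)) _
        _ ≤ D^2 * (H 0).trace := by
            have h1 := hnormD 1 (by simp only [Finset.mem_Icc]; omega)
            have h2 := DAdagradAux.trace_nonneg' (hHpsd 0 (Nat.zero_le T))
            exact mul_le_mul_of_nonneg_right h1 h2
    | succ k ih =>
      intro hk
      have hk' : k ≤ T := by omega
      have hmem : k + 1 ∈ Icc 1 T := by simp only [Finset.mem_Icc]; omega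
      rw [Finset.sum_Icc_succ_top (by omega : 1 ≤ k + 1)]
      have ihk := ih hk'
      have hGdiff : Gm (k+1) - Gm k = Matrix.vecMulVec (gg (k+1)) (gg (k+1)) := by
        have hrec := hGrec (k+1) hmem
        simp only [Nat.add_sub_cancel] at hrec
        rw [hrec, hggt]
        abel
      have hpsd_diff : (H (k+1) - H k).PosSemidef := by
        apply DAdagradAux.sub_posSemidef (hHpd (k+1) hk) (hHpsd k hk')
        rw [(hH (k+1) hk).2, (hH k hk').2, hGdiff]
        exact DAdagradAux.psd_vecMulVec _
      have hquad := DAdagradAux.quad_le_trace hpsd_diff (pp (k+1) - nn (k+1))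
      have hsub : (pp (k+1) - nn (k+1)) ⬝ᵥ (H (k+1) - H k) *ᵥ (pp (k+1) - nn (k+1))
          = (pp (k+1) - nn (k+1)) ⬝ᵥ (H (k+1)) *ᵥ (pp (k+1) - nn (k+1))
            - (pp (k+1) - nn (k+1)) ⬝ᵥ (H k) *ᵥ (pp (k+1) - nn (k+1)) := by
        rw [Matrix.sub_mulVec, dotProduct_sub]
      have htr : (H (k+1) - H k).trace = (H (k+1)).trace - (H k).trace :=
        Matrix.trace_sub _ _
      have hnrm := hnormD (k+1) (by simp only [Finset.mem_Icc]; omega)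
      have htrnn := DAdagradAux.trace_nonneg' hpsd_diff
      have hquad2 : (pp (k+1) - nn (k+1)) ⬝ᵥ (H (k+1)) *ᵥ (pp (k+1) - nn (k+1))
          - (pp (k+1) - nn (k+1)) ⬝ᵥ (H k) *ᵥ (pp (k+1) - nn (k+1))
          ≤ D^2 * ((H (k+1)).trace - (H k).trace) := by
        rw [← hsub, ← htr]
        calc (pp (k+1) - nn (k+1)) ⬝ᵥ (H (k+1) - H k) *ᵥ (pp (k+1) - nn (k+1))
            ≤ ((pp (k+1) - nn (k+1)) ⬝ᵥ (pp (k+1) - nn (k+1))) * (H (k+1) - H k).trace := hquad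
          _ ≤ D^2 * (H (k+1) - H k).trace := mul_le_mul_of_nonneg_right hnrm htrnn
      linarith
  -- the gradient-norm sum
  have hGsum : ∀ n : ℕ, n ≤ T →
      ∑ t ∈ Icc 1 n, (gg t ⬝ᵥ (H t)⁻¹ *ᵥ gg t) ≤ 2 * ((H n).trace - (H 0).trace) := by
    intro n
    induction n with
    | zero =>
      intro _
      rw [show Icc 1 0 = (∅ : Finset ℕ) by rfl, Finset.sum_empty]
      simp
    | succ k ih =>
      intro hk
      have hk' : k ≤ T := by omega
      have hmem : k + 1 ∈ Icc 1 T := by simp only [Finset.mem_Icc]; omega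
      rw [Finset.sum_Icc_succ_top (by omega : 1 ≤ k + 1)]
      have ihk := ih hk'
      have hGdiff : Gm (k+1) - Gm k = Matrix.vecMulVec (gg (k+1)) (gg (k+1)) := by
        have hrec := hGrec (k+1) hmem
        simp only [Nat.add_sub_cancel] at hrec
        rw [hrec, hggt]
        abel
      have e1 : gg (k+1) ⬝ᵥ (H (k+1))⁻¹ *ᵥ gg (k+1)
          = ((H (k+1))⁻¹ * Matrix.vecMulVec (gg (k+1)) (gg (k+1))).trace :=
        DAdagradAux.dot_eq_trace _ _
      have e3 : (H (k+1))⁻¹ * Matrix.vecMulVec (gg (k+1)) (gg (k+1))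
          = H (k+1) - (H (k+1))⁻¹ * (H k * H k) := by
        rw [← hGdiff, ← (hH (k+1) hk).2, ← (hH k hk').2, Matrix.mul_sub, ← Matrix.mul_assoc,
          Matrix.nonsing_inv_mul _ (hHdet (k+1) hk), Matrix.one_mul]
      have e4 := DAdagradAux.trace_aux (hHpd (k+1) hk) (hHpsd k hk').1
      have e5 : gg (k+1) ⬝ᵥ (H (k+1))⁻¹ *ᵥ gg (k+1)
          = (H (k+1)).trace - ((H (k+1))⁻¹ * (H k * H k)).trace := by
        rw [e1, e3, Matrix.trace_sub]
      linarith
  -- assembling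
  have hsum := Finset.sum_le_sum hstep
  rw [Finset.sum_add_distrib, ← Finset.mul_sum, ← Finset.mul_sum] at hsum
  have hB := (hHpsd T le_rfl).dotProduct_mulVec_nonneg (pp (T+1) - nn (T+1))
  rw [star_trivial] at hB
  have hFT := hF T le_rfl
  have hGT := hGsum T le_rfl
  have htr0 := DAdagradAux.trace_nonneg' (hHpsd 0 (Nat.zero_le T))
  have htrT := DAdagradAux.trace_nonneg' (hHpsd T le_rfl)
  have hη2 : 2*η^2 = D^2 := by
    linear_combination (Real.sqrt 2*η + D)*hsd - η^2*hss
  have hkey : 2*η*(∑ t ∈ Icc 1 T, gg t ⬝ᵥ (pp t - nn t)) ≤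
      2*η*(Real.sqrt 2 * D * (H T).trace) := by
    have e8 : η^2*(2*((H T).trace - (H 0).trace)) = D^2*((H T).trace - (H 0).trace) := by
      linear_combination ((H T).trace - (H 0).trace)*hη2
    have e9 : 0 ≤ D^2 * (H 0).trace := mul_nonneg (sq_nonneg D) htr0
    have e10 : η^2 * (∑ t ∈ Icc 1 T, gg t ⬝ᵥ (H t)⁻¹ *ᵥ gg t) ≤
        η^2 * (2*((H T).trace - (H 0).trace)) :=
      mul_le_mul_of_nonneg_left hGT (sq_nonneg η)
    have e11 : 2*η*(Real.sqrt 2 * D * (H T).trace) = 2*D^2*(H T).trace := by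
      linear_combination (2*D*(H T).trace)*hsd
    linarith
  have hS2 : (∑ t ∈ Icc 1 T, gg t ⬝ᵥ (pp t - nn t)) ≤ Real.sqrt 2 * D * (H T).trace :=
    le_of_mul_le_mul_left hkey (by positivity)
  have hsum2 := Finset.sum_le_sum hconvstep
  have h0 : (0:ℝ) ≤ Real.sqrt 2 * D := by positivity
  have hfin : Real.sqrt 2 * D * (H T).trace ≤ Real.sqrt 2 * D * (1 + (H T).trace) := by
    nlinarith
  linarith
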